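/- The map φ defined recursively by φ(ε)=ε; φ(Uα)=UD·φ(α); φ(UαDβ)=UUD·φ(α)·D·φ(β); φ(UαD₂β)=U·φ(αD)·D·φ(β); and φ(UαD_iβ)=UD·φ(αD_{i-1})·φ(β) for i≥3, sends every Dyck meander with catastrophes of length n to a Dyck path of semilength n. -/

import Mathlib

/-- Every prefix of the path has nonnegative sum (the path stays weakly above the x-axis). -/
def NonnegPrefixes (w : List ℤ) : Prop := ∀ p ∈ w.inits, 0 ≤ p.sum

/-- A Dyck word: steps U = 1 and D = -1, nonnegative prefixes, ending at height 0. -/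
def IsDyckWord (w : List ℤ) : Prop :=
  (∀ s ∈ w, s = 1 ∨ s = -1) ∧ NonnegPrefixes w ∧ w.sum = 0

/-- A Motzkin path: steps U = 1, F = 0, D = -1, nonnegative prefixes, ending at height 0. -/
def IsMotzkinWord (w : List ℤ) : Prop :=
  (∀ s ∈ w, s = 1 ∨ s = 0 ∨ s = -1) ∧ NonnegPrefixes w ∧ w.sum = 0

/-- A Dyck meander with catastrophes: steps U = 1, D = -1, D_i = -i (i ≥ 2),
nonnegative, and every catastrophe step D_i (i ≥ 2) lands exactly at height 0. -/
def IsDyckMeanderCat (w : List ℤ) : Prop :=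
  (∀ s ∈ w, s = 1 ∨ s ≤ -1) ∧ NonnegPrefixes w ∧
    ∀ i, i < w.length → w.getD i 0 ≤ -2 → (w.take (i+1)).sum = 0

/-- A Motzkin meander with catastrophes: steps U = 1, F = 0, D = -1, D_i = -i (i ≥ 2),
nonnegative, every catastrophe landing exactly at height 0. -/
def IsMotzkinMeanderCat (w : List ℤ) : Prop :=
  (∀ s ∈ w, s ≤ 1) ∧ NonnegPrefixes w ∧
    ∀ i, i < w.length → w.getD i 0 ≤ -2 → (w.take (i+1)).sum = 0

def IsDyckExcursionCat (w : List ℤ) : Prop := IsDyckMeanderCat w ∧ w.sum = 0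

def IsMotzkinExcursionCat (w : List ℤ) : Prop := IsMotzkinMeanderCat w ∧ w.sum = 0

/-- The factor `pat` occurs in `w` starting at position `i`. -/
def OccursAt (pat w : List ℤ) (i : ℕ) : Prop := pat <+: w.drop i

/-- `w` has no occurrence of the factor `pat`. -/
def Avoids (pat w : List ℤ) : Prop := ∀ i, ¬ OccursAt pat w i

/-- `w` has no occurrence of `pat` starting at height h > 0. -/
def AvoidsAtPosHeight (pat w : List ℤ) : Prop :=
  ∀ i, OccursAt pat w i → (w.take i).sum ≤ 0

/-- `w` has no occurrence of `pat` starting at height h ≥ 2. -/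
def AvoidsAtHeightGe2 (pat w : List ℤ) : Prop :=
  ∀ i, OccursAt pat w i → (w.take i).sum < 2

def pUUU : List ℤ := [1, 1, 1]
def pDUD : List ℤ := [-1, 1, -1]
def pUUD : List ℤ := [1, 1, -1]
def pUD : List ℤ := [1, -1]
def pDU : List ℤ := [-1, 1]

/-- The recursive equations defining the paper's map φ from Dyck meanders with
catastrophes to Dyck paths:
φ(ε) = ε; φ(Uα) = UD φ(α); φ(UαDβ) = UUD φ(α) D φ(β);
φ(UαD₂β) = U φ(αD) D φ(β); φ(UαD_iβ) = UD φ(αD_{i-1}) φ(β) for i ≥ 3. -/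
def PhiSpec (φ : List ℤ → List ℤ) : Prop :=
  (φ [] = []) ∧
  (∀ α : List ℤ, (∀ s ∈ α, s = 1 ∨ s = -1) → NonnegPrefixes α →
      φ (1 :: α) = 1 :: -1 :: φ α) ∧
  (∀ α β : List ℤ, (∀ s ∈ α, s = 1 ∨ s = -1) → NonnegPrefixes α → α.sum = 0 →
      IsDyckMeanderCat β →
      φ (1 :: (α ++ -1 :: β)) = 1 :: 1 :: -1 :: (φ α ++ -1 :: φ β)) ∧
  (∀ α β : List ℤ, (∀ s ∈ α, s = 1 ∨ s = -1) → NonnegPrefixes α → α.sum = 1 →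
      IsDyckMeanderCat β →
      φ (1 :: (α ++ -2 :: β)) = 1 :: (φ (α ++ [-1]) ++ -1 :: φ β)) ∧
  (∀ (α β : List ℤ) (i : ℕ), 3 ≤ i → (∀ s ∈ α, s = 1 ∨ s = -1) → NonnegPrefixes α →
      α.sum = (i : ℤ) - 1 → IsDyckMeanderCat β →
      φ (1 :: (α ++ (-(i : ℤ)) :: β)) = 1 :: -1 :: (φ (α ++ [-((i : ℤ) - 1)]) ++ φ β))

lemma nnp_iff (w : List ℤ) : NonnegPrefixes w ↔ ∀ k, 0 ≤ (w.take k).sum := by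
  constructor
  · intro h k
    exact h _ ((List.mem_inits _ _).2 (List.take_prefix k w))
  · intro h p hp
    rw [List.prefix_iff_eq_take.1 ((List.mem_inits _ _).1 hp)]
    exact h _

lemma dyckUD : IsDyckWord [1, -1] := by
  refine ⟨by decide, ?_, by decide⟩
  intro p hp
  simp [List.inits] at hp
  rcases hp with rfl | rfl | rfl <;> decide

lemma dyck_append {a b : List ℤ} (ha : IsDyckWord a) (hb : IsDyckWord b) :
    IsDyckWord (a ++ b) := by
  obtain ⟨ha1, ha2, ha3⟩ := ha
  obtain ⟨hb1, hb2, hb3⟩ := hb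
  refine ⟨?_, ?_, by simp [ha3, hb3]⟩
  · intro s hs
    rcases List.mem_append.1 hs with h | h
    exacts [ha1 s h, hb1 s h]
  · rw [nnp_iff]
    intro k
    rw [List.take_append, List.sum_append]
    have h1 := (nnp_iff a).1 ha2 k
    have h2 := (nnp_iff b).1 hb2 (k - a.length)
    omega

lemma dyck_nest {a : List ℤ} (ha : IsDyckWord a) : IsDyckWord (1 :: (a ++ [-1])) := by
  obtain ⟨ha1, ha2, ha3⟩ := ha
  refine ⟨?_, ?_, by simp [ha3]⟩
  · intro s hs
    rcases List.mem_cons.1 hs with rfl | hs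
    · exact Or.inl rfl
    rcases List.mem_append.1 hs with h | h
    · exact ha1 s h
    · simp at h
      exact Or.inr h
  · rw [nnp_iff]
    intro k
    cases k with
    | zero => simp
    | succ j =>
      rw [List.take_succ_cons, List.sum_cons, List.take_append,
        List.sum_append]
      have h1 := (nnp_iff a).1 ha2 j
      have h2 : (-1 : ℤ) ≤ ([(-1 : ℤ)].take (j - a.length)).sum := by
        rcases Nat.eq_zero_or_pos (j - a.length) with h | h
        · simp [h]
        · rw [List.take_of_length_le (by simp only [List.length_singleton]; omega)]
          simp
      omega

lemma meander_of_pm {α : List ℤ} (hs : ∀ s ∈ α, s = 1 ∨ s = -1)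
    (h : NonnegPrefixes α) : IsDyckMeanderCat α := by
  refine ⟨fun s h' => (hs s h').imp id (fun e => le_of_eq e), h, ?_⟩
  intro i hi hstep
  have hm : α.getD i 0 ∈ α := by
    rw [List.getD_eq_getElem _ _ hi]
    exact List.getElem_mem hi
  rcases hs _ hm with e | e <;> omega

lemma meanderCat_append_single {α : List ℤ} (hs : ∀ s ∈ α, s = 1 ∨ s = -1)
    (h : NonnegPrefixes α) (x : ℤ) (hx : x ≤ -1) (hsum : α.sum + x = 0) :
    IsDyckMeanderCat (α ++ [x]) := by
  refine ⟨?_, ?_, ?_⟩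
  · intro s hsm
    rcases List.mem_append.1 hsm with h' | h'
    · rcases hs s h' with e | e
      · exact Or.inl e
      · exact Or.inr (le_of_eq e)
    · simp at h'
      exact Or.inr (by omega)
  · rw [nnp_iff]
    intro k
    rcases le_or_gt k α.length with hk | hk
    · rw [List.take_append_of_le_length hk]
      exact (nnp_iff α).1 h k
    · rw [List.take_of_length_le (by simp; omega)]
      simp [hsum]
  · intro i hi hstep
    simp at hi
    rcases lt_or_ge i α.length with h' | h'
    · exfalso
      have hgd : (α ++ [x]).getD i 0 = α[i] := by
        rw [List.getD_eq_getElem _ _ (by simp; omega)]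
        exact List.getElem_append_left h'
      rcases hs _ (List.getElem_mem h') with e | e <;> omega
    · have hieq : i = α.length := by omega
      subst hieq
      rw [List.take_of_length_le (by simp)]
      simp [hsum]

lemma phi_main (φ : List ℤ → List ℤ) (hφ : PhiSpec φ) :
    ∀ N P, P.length ≤ N → IsDyckMeanderCat P →
      IsDyckWord (φ P) ∧ (φ P).length = 2 * P.length := by
  obtain ⟨h0, h1, h2, h3, h4⟩ := hφ
  intro N
  induction N with
  | zero =>
    intro P hlen hP
    have hnil : P = [] := List.length_eq_zero_iff.1 (Nat.le_zero.1 hlen)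
    subst hnil
    rw [h0]
    refine ⟨⟨by simp, ?_, by simp⟩, by simp⟩
    intro p hp
    simp [List.inits] at hp
    simp [hp]
  | succ N IH =>
    intro P hlen hP
    obtain ⟨hsteps, hnnp, hcat⟩ := hP
    rw [nnp_iff] at hnnp
    rcases P with _ | ⟨s, Q⟩
    · rw [h0]
      refine ⟨⟨by simp, ?_, by simp⟩, by simp⟩
      intro p hp
      simp [List.inits] at hp
      simp [hp]
    · have hs1 : s = 1 := by
        have hm : s = 1 ∨ s ≤ -1 := hsteps s (by simp)
        have h1' := hnnp 1
        simp at h1'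
        omega
      subst hs1
      have hQlen : Q.length ≤ N := by
        simp at hlen; omega
      have hQnnp_weak : ∀ k, -1 ≤ (Q.take k).sum := by
        intro k
        have := hnnp (k + 1)
        rw [List.take_succ_cons, List.sum_cons] at this
        omega
      have hQcat' : ∀ i, i < Q.length → Q.getD i 0 ≤ -2 → (Q.take (i+1)).sum = -1 := by
        intro i hi hst
        have := hcat (i + 1) (by simp; omega) (by rw [List.getD_cons_succ]; exact hst)
        rw [List.take_succ_cons, List.sum_cons] at this
        omega
      by_cases hex : ∃ m, m < Q.length ∧ (Q.take (m+1)).sum = -1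
      · -- Case B: a return to the axis exists; find the first one
        obtain ⟨m, hmlt, hmsum, hmin'⟩ :
            ∃ m, m < Q.length ∧ (Q.take (m+1)).sum = -1 ∧
              ∀ k < m, (Q.take (k+1)).sum ≠ -1 :=
          ⟨Nat.find hex, (Nat.find_spec hex).1, (Nat.find_spec hex).2,
            fun k hk h => Nat.find_min hex hk
              ⟨by have := (Nat.find_spec hex).1; omega, h⟩⟩
        have hpre : ∀ k ≤ m, 0 ≤ (Q.take k).sum := by
          intro k hk
          rcases Nat.eq_zero_or_pos k with rfl | hpos
          · simp
          obtain ⟨j, rfl⟩ : ∃ j, k = j + 1 := ⟨k - 1, by omega⟩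
          have hne := hmin' j (by omega)
          have := hQnnp_weak (j + 1)
          omega
        set α := Q.take m with hαdef
        set β := Q.drop (m+1) with hβdef
        have hαlen : α.length = m := by
          rw [hαdef, List.length_take]; omega
        have hβlen : β.length = Q.length - (m + 1) := by
          rw [hβdef, List.length_drop]
        obtain ⟨s, hdecomp, hsstep, hαs⟩ :
            ∃ s : ℤ, Q = α ++ s :: β ∧ (s = 1 ∨ s ≤ -1) ∧ α.sum + s = -1 := by
          refine ⟨Q[m]'hmlt, ?_, ?_, ?_⟩
          · rw [hαdef, hβdef, ← List.drop_eq_getElem_cons hmlt]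
            exact (List.take_append_drop m Q).symm
          · exact hsteps _ (List.mem_cons_of_mem _ (List.getElem_mem hmlt))
          · have htake : Q.take (m+1) = α ++ [Q[m]'hmlt] := by
              conv_lhs => rw [show Q = α ++ Q[m]'hmlt :: β by
                rw [hαdef, hβdef, ← List.drop_eq_getElem_cons hmlt]
                exact (List.take_append_drop m Q).symm]
              rw [show m + 1 = α.length + 1 by omega, List.take_append]
              simp
            rw [htake] at hmsum
            simpa using hmsum
        have hαnonneg : 0 ≤ α.sum := by
          have := hpre m le_rfl
          rwa [← hαdef] at this
        have hsle : s ≤ -1 := by omega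
        have hαsteps : ∀ x ∈ α, x = 1 ∨ x = -1 := by
          intro x hx
          obtain ⟨i, hi, rfl⟩ := List.mem_iff_getElem.1 hx
          have hi' : i < m := by omega
          have hx' : α[i] = Q[i]'(by omega) := by
            simp only [hαdef, List.getElem_take]
          rcases hsteps α[i]
              (by rw [hx']; exact List.mem_cons_of_mem _ (List.getElem_mem (by omega))) with
            e | e
          · exact Or.inl e
          · right
            by_contra hne
            have hle2 : α[i] ≤ -2 := by omega
            have := hQcat' i (by omega)
              (by rw [List.getD_eq_getElem _ _ (by omega), ← hx']; exact hle2)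
            exact hmin' i hi' this
        have hαnnp : NonnegPrefixes α := by
          rw [nnp_iff]
          intro k
          rw [hαdef, List.take_take]
          exact hpre _ (min_le_right _ _)
        have hPsum : ∀ k, ((1 :: Q).take (m+2+k)).sum = (β.take k).sum := by
          intro k
          conv_lhs => rw [hdecomp]
          rw [show m+2+k = (m+1+k)+1 by omega, List.take_succ_cons,
            show m+1+k = α.length + (1+k) by omega, List.take_length_add_append,
            show 1+k = k+1 by omega, List.take_succ_cons]
          simp only [List.sum_cons, List.sum_append]
          omega
        have hβmem : ∀ x ∈ β, x ∈ (1 : ℤ) :: Q := by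
          intro x hx
          exact List.mem_cons_of_mem _ (List.mem_of_mem_drop (hβdef ▸ hx))
        have hβ : IsDyckMeanderCat β := by
          refine ⟨fun x hx => hsteps x (hβmem x hx), ?_, ?_⟩
          · rw [nnp_iff]
            intro k
            rw [← hPsum k]
            exact hnnp _
          · intro i hi hstep
            have hil : m + 1 + i < Q.length := by omega
            have hgd : β[i] = Q[m+1+i]'hil := by
              simp only [hβdef, List.getElem_drop]
            have hQst : Q.getD (m+1+i) 0 ≤ -2 := by
              rw [List.getD_eq_getElem _ _ hil, ← hgd,
                ← List.getD_eq_getElem β 0 hi]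
              exact hstep
            have := hcat (m+2+i) (by simp; omega)
              (by rw [show m+2+i = (m+1+i)+1 by omega, List.getD_cons_succ]; exact hQst)
            rw [show m+2+i+1 = m+2+(i+1) by omega, hPsum (i+1)] at this
            exact this
        have hαN : α.length ≤ N := by omega
        have hβN : β.length ≤ N := by omega
        have hcases : s = -1 ∨ s = -2 ∨ s ≤ -3 := by omega
        rcases hcases with rfl | rfl | hs3
        · -- s = -1
          have hrw : (1 : ℤ) :: Q = 1 :: (α ++ -1 :: β) := by rw [hdecomp]
          rw [hrw, h2 α β hαsteps hαnnp (by omega) hβ]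
          obtain ⟨hDα, hLα⟩ := IH α hαN (meander_of_pm hαsteps hαnnp)
          obtain ⟨hDβ, hLβ⟩ := IH β hβN hβ
          constructor
          · have hd := dyck_append (dyck_nest (dyck_append dyckUD hDα)) hDβ
            have hEq : (1:ℤ) :: 1 :: -1 :: (φ α ++ -1 :: φ β)
                = (1 :: (([1,-1] ++ φ α) ++ [-1])) ++ φ β := by simp
            rw [hEq]; exact hd
          · simp only [List.length_cons, List.length_append, hLα, hLβ, List.length_nil]
            omega
        · -- s = -2
          have hrw : (1 : ℤ) :: Q = 1 :: (α ++ -2 :: β) := by rw [hdecomp]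
          rw [hrw, h3 α β hαsteps hαnnp (by omega) hβ]
          have hγ : IsDyckMeanderCat (α ++ [-1]) :=
            meanderCat_append_single hαsteps hαnnp (-1) (by norm_num) (by omega)
          obtain ⟨hDγ, hLγ⟩ := IH (α ++ [-1]) (by rw [List.length_append, List.length_singleton]; omega) hγ
          obtain ⟨hDβ, hLβ⟩ := IH β hβN hβ
          constructor
          · have hd := dyck_append (dyck_nest hDγ) hDβ
            have hEq : (1:ℤ) :: (φ (α ++ [-1]) ++ -1 :: φ β)
                = (1 :: (φ (α ++ [-1]) ++ [-1])) ++ φ β := by simp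
            rw [hEq]; exact hd
          · simp only [List.length_cons, List.length_append, hLγ, hLβ,
              List.length_singleton, List.length_nil]
            omega
        · -- s ≤ -3
          obtain ⟨i, hic⟩ : ∃ i : ℕ, (i : ℤ) = -s :=
            ⟨(-s).toNat, Int.toNat_of_nonneg (by omega)⟩
          have hi3 : 3 ≤ i := by omega
          have hsval : s = -(i : ℤ) := by omega
          have hrw : (1 : ℤ) :: Q = 1 :: (α ++ (-(i : ℤ)) :: β) := by
            rw [hdecomp, hsval]
          rw [hrw, h4 α β i hi3 hαsteps hαnnp (by omega) hβ]
          have hγ : IsDyckMeanderCat (α ++ [-((i : ℤ) - 1)]) :=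
            meanderCat_append_single hαsteps hαnnp _ (by omega) (by omega)
          obtain ⟨hDγ, hLγ⟩ := IH (α ++ [-((i : ℤ) - 1)]) (by rw [List.length_append, List.length_singleton]; omega) hγ
          obtain ⟨hDβ, hLβ⟩ := IH β hβN hβ
          constructor
          · have hd := dyck_append dyckUD (dyck_append hDγ hDβ)
            have hEq : (1:ℤ) :: -1 :: (φ (α ++ [-((i : ℤ) - 1)]) ++ φ β)
                = [1, -1] ++ (φ (α ++ [-((i : ℤ) - 1)]) ++ φ β) := by simp
            rw [hEq]; exact hd
          · simp only [List.length_cons, List.length_append, hLγ, hLβ,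
              List.length_singleton, List.length_nil]
            omega
      · -- Case A: no return; Q is a nonnegative ±1 path
        push_neg at hex
        have hQsteps : ∀ x ∈ Q, x = 1 ∨ x = -1 := by
          intro x hx
          obtain ⟨i, hi, rfl⟩ := List.mem_iff_getElem.1 hx
          rcases hsteps Q[i] (List.mem_cons_of_mem _ (List.getElem_mem hi)) with e | e
          · exact Or.inl e
          · right
            by_contra hne
            have hle2 : Q[i] ≤ -2 := by omega
            have := hQcat' i hi (by rw [List.getD_eq_getElem _ _ hi]; exact hle2)
            exact hex i hi this
        have hQnnp : ∀ k, 0 ≤ (Q.take k).sum := by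
          intro k
          rcases Nat.eq_zero_or_pos k with rfl | hpos
          · simp
          obtain ⟨j, rfl⟩ : ∃ j, k = j + 1 := ⟨k - 1, by omega⟩
          rcases lt_or_ge j Q.length with h | h
          · have := hex j h
            have := hQnnp_weak (j + 1)
            omega
          · rw [List.take_of_length_le (by omega)]
            rcases Nat.eq_zero_or_pos Q.length with h0 | h0
            · simp [List.length_eq_zero_iff.1 h0]
            · have hne := hex (Q.length - 1) (by omega)
              have hw := hQnnp_weak Q.length
              rw [show Q.length - 1 + 1 = Q.length by omega] at hne
              rw [List.take_length] at hne hw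
              omega
        rw [h1 Q hQsteps ((nnp_iff Q).2 hQnnp)]
        obtain ⟨hDQ, hLQ⟩ := IH Q hQlen (meander_of_pm hQsteps ((nnp_iff Q).2 hQnnp))
        constructor
        · have hd := dyck_append dyckUD hDQ
          have hEq : (1:ℤ) :: -1 :: φ Q = [1, -1] ++ φ Q := by simp
          rw [hEq]; exact hd
        · simp only [List.length_cons, hLQ]
          omega

/-- The map φ sends every Dyck meander with catastrophes of length n to a Dyck path
of semilength n. -/
theorem stmt_4 (φ : List ℤ → List ℤ) (hφ : PhiSpec φ) (n : ℕ) (P : List ℤ)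
    (hP : IsDyckMeanderCat P) (hn : P.length = n) :
    IsDyckWord (φ P) ∧ (φ P).length = 2 * n := by
  subst hn
  exact phi_main φ hφ P.length P le_rfl hP
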